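/- Let x₀ = √(-2α²·ln(y/(2w))) and suppose 0 < x < x₀. Then for every β > 0 the quantity -[2·ln(y/(2w)) + (1/α²)·(xβ/(β + y²/(4α²)))²] is strictly positive; i.e., σ_f = -y/2 is a local minimum of the dual function for all β > 0. -/

import Mathlib

noncomputable def dualG (y α β σ : ℝ) : ℝ := β - (σ^2 + y * σ) / α^2

noncomputable def dualF (x y α σ : ℝ) : ℝ := -x * (σ^2 + y * σ) / α^2

noncomputable def dualPd (w x y α β σ : ℝ) : ℝ :=
  -(1/2) * (dualF x y α σ)^2 / (dualG y α β σ)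
    - Real.log ((σ + y) / w) * (σ^2 + y * σ)
    + (1/2) * σ^2 - x^2 * (σ^2 + y * σ) / (2 * α^2)

noncomputable def Hfun (w x y α β σ : ℝ) : ℝ :=
  x^2/(2*α^4) * ((σ^2 + y*σ) * (2*β - (σ^2 + y*σ)/α^2) / (dualG y α β σ)^2)
    + Real.log ((σ + y) / w) + x^2/(2*α^2)

lemma hasDerivAt_dualPd (w x y α β σ : ℝ) (hw : 0 < w) (hα : α ≠ 0)
    (hσy : 0 < σ + y) (hG : dualG y α β σ ≠ 0) :
    HasDerivAt (fun s => dualPd w x y α β s) (-(2*σ+y) * Hfun w x y α β σ) σ := by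
  have ha2 : α^2 ≠ 0 := pow_ne_zero _ hα
  have harg : (σ + y)/w ≠ 0 := by positivity
  have hQ : HasDerivAt (fun s : ℝ => s^2 + y*s) (2*σ+y) σ := by
    have h1 := hasDerivAt_pow 2 σ
    have h2 := (hasDerivAt_id σ).const_mul y
    have := h1.add h2
    refine (h1.add h2).congr_deriv ?_
    norm_num
  have hA : HasDerivAt (fun s : ℝ => x * (s^2+y*s) / α^2) (x*(2*σ+y)/α^2) σ :=
    (hQ.const_mul x).div_const _
  have hA2 := hA.pow 2
  have hGd : HasDerivAt (fun s : ℝ => β - (s^2+y*s)/α^2) (-((2*σ+y)/α^2)) σ :=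
    (hQ.div_const _).const_sub β
  have hGne : (β - (σ^2+y*σ)/α^2) ≠ 0 := by simpa [dualG] using hG
  have hT1 := (((hA2.const_mul ((1:ℝ)/2)).div hGd hGne)).neg
  have hw' : ContinuousAt (fun s : ℝ => (s + y)/w) σ := by fun_prop
  have hLin : HasDerivAt (fun s : ℝ => (s + y)/w) (1/w) σ := by
    have := ((hasDerivAt_id σ).add_const y).div_const w
    simpa using this
  have hL : HasDerivAt (fun s : ℝ => Real.log ((s + y)/w)) ((1/w) / ((σ + y)/w)) σ :=
    hLin.log harg
  have hT2 := hL.mul hQ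
  have hT3 := (hasDerivAt_pow 2 σ).const_mul ((1:ℝ)/2)
  have hT4 := (hQ.const_mul (x^2)).div_const (2*α^2)
  have total := ((hT1.sub hT2).add hT3).sub hT4
  have hfun_eq : (fun s => dualPd w x y α β s)
      = (fun s => (-(1/2 * (x * (s^2+y*s) / α^2)^2 / (β - (s^2+y*s)/α^2))
          - Real.log ((s + y)/w) * (s^2+y*s) + 1/2 * s^2) - x^2 * (s^2+y*s) / (2*α^2)) := by
    funext s
    simp only [dualPd, dualF, dualG]
    ring
  rw [hfun_eq]
  refine total.congr_deriv ?_
  simp only [Hfun, dualG]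
  have hwne : w ≠ 0 := ne_of_gt hw
  have hσyne : σ + y ≠ 0 := ne_of_gt hσy
  have hGne2 : β * α ^ 2 - (σ ^ 2 + y * σ) ≠ 0 := by
    intro h; apply hGne; field_simp; linarith
  norm_num
  field_simp
  ring

set_option maxHeartbeats 1000000 in
/-- If 0 < x < x₀ = √(-2α²ln(y/(2w))), then for every β > 0 the quantity
(P^d)''(-y/2) = -[2ln(y/(2w)) + (1/α²)(xβ/(β+y²/(4α²)))²] is strictly positive,
and σ_f = -y/2 is a local minimum of the dual for all β > 0. -/
theorem pseudo_point_local_min_small_x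
    (w x y α : ℝ) (hw : 0 < w) (hy : 0 < y) (hyw : y < 2 * w) (hα : α ≠ 0)
    (hx : 0 < x) (hxo : x < Real.sqrt (-2 * α^2 * Real.log (y / (2 * w)))) :
    ∀ β : ℝ, 0 < β →
      0 < -(2 * Real.log (y / (2 * w)) +
          (1 / α^2) * (x * β / (β + y^2 / (4 * α^2)))^2) ∧
      IsLocalMin (fun σ => dualPd w x y α β σ) (-y / 2) := by
  intro β hβ
  have ha2 : (0:ℝ) < α^2 := by positivity
  have hL0 : Real.log (y / (2 * w)) < 0 :=
    Real.log_neg (by positivity) (by rw [div_lt_one (by positivity)]; linarith)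
  have hx2 : x^2 < -2 * α^2 * Real.log (y / (2 * w)) :=
    (Real.lt_sqrt hx.le).1 hxo
  have e2 : x^2 / α^2 < -2 * Real.log (y / (2 * w)) := by
    rw [div_lt_iff₀ ha2]; nlinarith [hx2]
  have hhalf : x^2 / (2*α^2) < -Real.log (y / (2 * w)) := by
    rw [div_lt_iff₀ (by positivity)]; nlinarith [hx2]
  constructor
  · have hG0 : (0:ℝ) < β + y^2/(4*α^2) := by positivity
    have h2 : (x * β / (β + y^2 / (4 * α^2)))^2 < x^2 := by
      have hlt : x * β / (β + y^2 / (4 * α^2)) < x := by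
        rw [div_lt_iff₀ hG0]
        have : 0 < y^2/(4*α^2) := by positivity
        nlinarith
      have hpos : 0 < x * β / (β + y^2 / (4 * α^2)) := by positivity
      nlinarith
    have h3 : (1/α^2) * (x * β / (β + y^2 / (4 * α^2)))^2 < (1/α^2) * x^2 :=
      (mul_lt_mul_iff_right₀ (by positivity)).2 h2
    have h4 : (1/α^2) * x^2 = x^2/α^2 := by ring
    linarith [h3, h4 ▸ h3]
  · obtain ⟨b, hb⟩ : ∃ b : ℝ, b = -y/2 := ⟨_, rfl⟩
    rw [show -y / 2 = b from hb.symm]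
    have hQ0 : b^2 + y*b < 0 := by rw [hb]; nlinarith
    have hbypos : 0 < b + y := by rw [hb]; linarith
    have hGbpos : 0 < dualG y α β b := by
      have h1 : (b^2 + y*b)/α^2 < 0 := div_neg_of_neg_of_pos hQ0 ha2
      simp only [dualG]; linarith
    have hGb : dualG y α β b ≠ 0 := ne_of_gt hGbpos
    have hHb : Hfun w x y α β b < 0 := by
      have hfac : 0 < 2*β - (b^2 + y*b)/α^2 := by
        have h1 : (b^2 + y*b)/α^2 < 0 := div_neg_of_neg_of_pos hQ0 ha2
        linarith
      have hGsq : 0 < (dualG y α β b)^2 := by positivity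
      have hT : x^2/(2*α^4) * ((b^2 + y*b) * (2*β - (b^2 + y*b)/α^2) / (dualG y α β b)^2)
          < 0 :=
        mul_neg_of_pos_of_neg (by positivity)
          (div_neg_of_neg_of_pos (mul_neg_of_neg_of_pos hQ0 hfac) hGsq)
      have hlogeq : Real.log ((b + y)/w) = Real.log (y/(2*w)) := by
        rw [hb]; rw [show -y/2 + y = y/2 by ring, div_div]
      simp only [Hfun, hlogeq]
      linarith
    have hHcont : ContinuousAt (Hfun w x y α β) b := by
      have hnum : ContinuousAt (fun σ : ℝ => (σ^2 + y*σ) * (2*β - (σ^2 + y*σ)/α^2)) b := by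
        fun_prop
      have hden : ContinuousAt (fun σ : ℝ => (dualG y α β σ)^2) b := by
        simp only [dualG]; fun_prop
      have hdne : (dualG y α β b)^2 ≠ 0 := pow_ne_zero _ hGb
      have hlogc : ContinuousAt (fun σ : ℝ => Real.log ((σ + y) / w)) b := by
        have harg : ContinuousAt (fun σ : ℝ => (σ + y)/w) b := by fun_prop
        exact harg.log (by positivity)
      exact ((continuousAt_const.mul (hnum.div hden hdne)).add hlogc).add continuousAt_const
    have hev : ∀ᶠ σ in nhds b, Hfun w x y α β σ < 0 :=
      hHcont.eventually_lt continuousAt_const hHb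
    obtain ⟨ε, hε, hball⟩ := Metric.eventually_nhds_iff.1 hev
    obtain ⟨δ, hδdef⟩ : ∃ δ : ℝ, δ = min ε (y/2) := ⟨_, rfl⟩
    have hd1 : δ ≤ ε := hδdef ▸ min_le_left _ _
    have hd2 : δ ≤ y/2 := hδdef ▸ min_le_right _ _
    have hδ : 0 < δ := hδdef ▸ lt_min hε (by linarith)
    have hmem : ∀ σ ∈ Set.Ioo (b - δ) (b + δ),
        Hfun w x y α β σ < 0 ∧ 0 < σ + y ∧ dualG y α β σ ≠ 0 := by
      intro σ hσ
      obtain ⟨h1, h2⟩ := hσ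
      have hH : Hfun w x y α β σ < 0 := by
        apply hball
        rw [Real.dist_eq, abs_lt]
        constructor <;> linarith
      have hσy : 0 < σ + y := by rw [hb] at h1; linarith
      have hσ0 : σ < 0 := by rw [hb] at h2; linarith
      have hQn : σ^2 + y * σ < 0 := by nlinarith
      have hGpos : dualG y α β σ ≠ 0 := by
        have h3 : (σ^2 + y*σ) / α^2 < 0 := div_neg_of_neg_of_pos hQn ha2
        simp only [dualG]; intro h; nlinarith [h3]
      exact ⟨hH, hσy, hGpos⟩
    have hderiv : ∀ σ ∈ Set.Ioo (b - δ) (b + δ),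
        HasDerivAt (fun s => dualPd w x y α β s)
          (-(2*σ+y) * Hfun w x y α β σ) σ := by
      intro σ hσ
      obtain ⟨_, h2, h4⟩ := hmem σ hσ
      exact hasDerivAt_dualPd w x y α β σ hw hα h2 h4
    have hbmem : b ∈ Set.Ioo (b - δ) (b + δ) := by
      constructor <;> linarith
    apply isLocalMin_of_deriv_Ioo (a := b - δ) (c := b + δ)
      (by linarith) (by linarith)
      ((hderiv b hbmem).differentiableAt.continuousAt)
    · intro σ hσ
      exact ((hderiv σ ⟨hσ.1, lt_trans hσ.2 (by linarith)⟩).differentiableAt).differentiableWithinAt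
    · intro σ hσ
      exact ((hderiv σ ⟨lt_trans (by linarith) hσ.1, hσ.2⟩).differentiableAt).differentiableWithinAt
    · intro σ hσ
      have hσ2 : σ < b := hσ.2
      have hσ' : σ ∈ Set.Ioo (b - δ) (b + δ) := ⟨hσ.1, by linarith⟩
      rw [(hderiv σ hσ').deriv]
      obtain ⟨hH, -, -⟩ := hmem σ hσ'
      have h2σ : 2*σ + y < 0 := by rw [hb] at hσ2; linarith
      nlinarith
    · intro σ hσ
      have hσ1 : b < σ := hσ.1
      have hσ' : σ ∈ Set.Ioo (b - δ) (b + δ) := ⟨by linarith, hσ.2⟩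
      rw [(hderiv σ hσ').deriv]
      obtain ⟨hH, -, -⟩ := hmem σ hσ'
      have h2σ : 0 < 2*σ + y := by rw [hb] at hσ1; linarith
      nlinarith
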